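/- Let n ≥ 2 and α ∈ [0,1]. For every species tree S on n leaves, diam(PLR, S) ≤ α(n−1)(n−2) + (1−α)(2n−2), and if S is a caterpillar on n leaves then H(S) = (n−1)(n−2)/2 and diam(PLR, S) = α(n−1)(n−2) + (1−α)(2n−2); hence among all species trees with n leaves the diameter is maximized by caterpillars. -/

import Mathlib

open SimpleGraph

attribute [local instance] Classical.propDecidable

/-- A rooted tree: a finite connected acyclic graph with a distinguished root. -/
structure RTree (V : Type*) [Fintype V] where
  adj : SimpleGraph V
  isTree : adj.IsTree
  root : V

variable {V : Type*} [Fintype V]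

/-- `Anc T a b` : `a` is an ancestor of `b` (i.e. `b ⪯ a`), expressed as:
`a` lies on the (unique) path from the root to `b`. -/
def Anc (T : RTree V) (a b : V) : Prop :=
  T.adj.dist T.root b = T.adj.dist T.root a + T.adj.dist a b

/-- `IsChild T c p` : `c` is a child of `p`. -/
def IsChild (T : RTree V) (c p : V) : Prop :=
  T.adj.Adj c p ∧ Anc T p c

/-- The set of children of `v`. -/
def childSet (T : RTree V) (v : V) : Set V := {c | IsChild T c v}

/-- A leaf is a node with no children. -/
def IsLeaf (T : RTree V) (v : V) : Prop := ∀ c, ¬ IsChild T c v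

/-- The clade of `v`: the set of leaves descending from `v`. -/
def clade (T : RTree V) (v : V) : Set V := {x | IsLeaf T x ∧ Anc T v x}

/-- `w` is the lowest common ancestor of the set `X` in `T`. -/
def IsLCA (T : RTree V) (X : Set V) (w : V) : Prop :=
  (∀ x ∈ X, Anc T w x) ∧ ∀ w', (∀ x ∈ X, Anc T w' x) → Anc T w' w

/-- A species tree is a rooted binary tree: every internal node has exactly two children. -/
def IsSpeciesTree (S : RTree V) : Prop :=
  ∀ v, ¬ IsLeaf S v → (childSet S v).ncard = 2

/-- Number of leaves of a rooted tree. -/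
noncomputable def numLeaves (T : RTree V) : ℕ := {v | IsLeaf T v}.ncard

/-- `Hsum S` = `H(S)`: the sum of root-to-internal-node distances in `S`. -/
noncomputable def Hsum (S : RTree V) : ℕ :=
  ∑ v : V, if IsLeaf S v then 0 else S.adj.dist S.root v

inductive Evt | dup | spec | extant
deriving DecidableEq

/-- A reconciled gene tree with species tree `S`, whose leaves are labeled bijectively by
the set of genes `Γ`. -/
structure Recon (Γ : Type*) (VG : Type*) (VS : Type*) [Fintype VG] [Fintype VS]
    (S : RTree VS) where
  tree : RTree VG
  geneLeaf : Γ → VG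
  geneLeaf_inj : Function.Injective geneLeaf
  geneLeaf_range : ∀ v, IsLeaf tree v ↔ ∃ g, geneLeaf g = v
  μ : VG → VS
  lbl : VG → Evt
  internal_children : ∀ v, ¬ IsLeaf tree v → 2 ≤ (childSet tree v).ncard
  leaf_species : ∀ v, IsLeaf tree v → IsLeaf S (μ v)
  leaf_lbl : ∀ v, IsLeaf tree v → lbl v = Evt.extant
  internal_lbl : ∀ v, ¬ IsLeaf tree v → lbl v = Evt.dup ∨ lbl v = Evt.spec
  time_consistent : ∀ a b, Anc tree a b → Anc S (μ a) (μ b)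
  spec_two_children : ∀ v, lbl v = Evt.spec →
    ¬ IsLeaf S (μ v) ∧ (childSet tree v).ncard = 2
  spec_separates : ∀ v, lbl v = Evt.spec →
    ∀ v₁ v₂, IsChild tree v₁ v → IsChild tree v₂ v → v₁ ≠ v₂ →
      ∃ s₁ s₂, IsChild S s₁ (μ v) ∧ IsChild S s₂ (μ v) ∧ s₁ ≠ s₂ ∧
        ((Anc S s₁ (μ v₁) ∧ Anc S s₂ (μ v₂)) ∨ (Anc S s₂ (μ v₁) ∧ Anc S s₁ (μ v₂)))

variable {Γ : Type*} {VS VG₁ VG₂ : Type*} [Fintype VS] [Fintype VG₁] [Fintype VG₂]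
  {S : RTree VS}

/-- The clade of a gene tree node, as a set of genes. -/
def gclade (𝒢 : Recon Γ VG₁ VS S) (v : VG₁) : Set Γ :=
  {g | Anc 𝒢.tree v (𝒢.geneLeaf g)}

/-- Two reconciled gene trees (over the same species tree and gene set) are comparable if
corresponding extant genes map to the same species. -/
def Comparable (𝒢₁ : Recon Γ VG₁ VS S) (𝒢₂ : Recon Γ VG₂ VS S) : Prop :=
  ∀ g, 𝒢₁.μ (𝒢₁.geneLeaf g) = 𝒢₂.μ (𝒢₂.geneLeaf g)

/-- `m` is the correspondence map `v ↦ lca_{G₂}(L(G₁(v)))`. -/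
def IsLcaMap (𝒢₁ : Recon Γ VG₁ VS S) (𝒢₂ : Recon Γ VG₂ VS S) (m : VG₁ → VG₂) : Prop :=
  ∀ v, IsLCA 𝒢₂.tree (𝒢₂.geneLeaf '' gclade 𝒢₁ v) (m v)

/-- `μ` is the lca-mapping: every node maps to the lca of the species of its leaf descendants. -/
def UsesLcaMapping (𝒢 : Recon Γ VG₁ VS S) : Prop :=
  ∀ v, IsLCA S (𝒢.μ '' clade 𝒢.tree v) (𝒢.μ v)

/-- The path component `d_path(𝒢₁,𝒢₂)` (with `m` the lca correspondence map). -/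
noncomputable def dPath (𝒢₁ : Recon Γ VG₁ VS S) (𝒢₂ : Recon Γ VG₂ VS S)
    (m : VG₁ → VG₂) : ℕ :=
  ∑ v : VG₁, S.adj.dist (𝒢₁.μ v) (𝒢₂.μ (m v))

/-- The label component `d_lbl(𝒢₁,𝒢₂)`. -/
noncomputable def dLbl (𝒢₁ : Recon Γ VG₁ VS S) (𝒢₂ : Recon Γ VG₂ VS S)
    (m : VG₁ → VG₂) : ℕ :=
  {v : VG₁ | 𝒢₁.lbl v ≠ 𝒢₂.lbl (m v)}.ncard

/-- The asymmetric dissimilarity `d_asym = α·d_path + (1−α)·d_lbl`. -/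
noncomputable def dAsym (α : ℝ) (𝒢₁ : Recon Γ VG₁ VS S) (𝒢₂ : Recon Γ VG₂ VS S)
    (m : VG₁ → VG₂) : ℝ :=
  α * (dPath 𝒢₁ 𝒢₂ m : ℝ) + (1 - α) * (dLbl 𝒢₁ 𝒢₂ m : ℝ)

/-- The Path-Label Reconciliation dissimilarity `PLR(𝒢₁,𝒢₂)`, where `m₁₂`, `m₂₁` are the
lca correspondence maps in the two directions. -/
noncomputable def PLR (α : ℝ) (𝒢₁ : Recon Γ VG₁ VS S) (𝒢₂ : Recon Γ VG₂ VS S)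
    (m₁₂ : VG₁ → VG₂) (m₂₁ : VG₂ → VG₁) : ℝ :=
  dAsym α 𝒢₁ 𝒢₂ m₁₂ + dAsym α 𝒢₂ 𝒢₁ m₂₁

/-- An edge `uv` (with `u` the parent of `v`) is redundant if both endpoints are duplications
mapped to the same species. -/
def RedundantEdge (𝒢 : Recon Γ VG₁ VS S) (u v : VG₁) : Prop :=
  IsChild 𝒢.tree v u ∧ 𝒢.μ u = 𝒢.μ v ∧ 𝒢.lbl u = Evt.dup ∧ 𝒢.lbl v = Evt.dup

/-- A reconciled gene tree is least duplication-resolved if it has no redundant edge. -/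
def LeastDupResolved (𝒢 : Recon Γ VG₁ VS S) : Prop :=
  ∀ u v, ¬ RedundantEdge 𝒢 u v

/-- `𝒢'` is obtained from `𝒢` by contracting the edge `uv` (`u` the parent of `v`), i.e.
deleting `v` and attaching its children to `u`; `φ` is the corresponding quotient map. -/
def IsContractionOf (𝒢 : Recon Γ VG₁ VS S) (u v : VG₁) (𝒢' : Recon Γ VG₂ VS S)
    (φ : VG₁ → VG₂) : Prop :=
  Function.Surjective φ ∧
  φ u = φ v ∧
  (∀ a b, φ a = φ b → a = b ∨ (a = u ∧ b = v) ∨ (a = v ∧ b = u)) ∧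
  (∀ x y, 𝒢'.tree.adj.Adj x y ↔
    ∃ a b, φ a = x ∧ φ b = y ∧ 𝒢.tree.adj.Adj a b ∧ ¬(a = u ∧ b = v) ∧ ¬(a = v ∧ b = u)) ∧
  𝒢'.tree.root = φ 𝒢.tree.root ∧
  (∀ g, 𝒢'.geneLeaf g = φ (𝒢.geneLeaf g)) ∧
  (∀ a, 𝒢'.μ (φ a) = 𝒢.μ a) ∧
  (∀ a, 𝒢'.lbl (φ a) = 𝒢.lbl a)

/-- Symmetrized redundancy relation on nodes. -/
def RedundantAdj (𝒢 : Recon Γ VG₁ VS S) (a b : VG₁) : Prop :=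
  RedundantEdge 𝒢 a b ∨ RedundantEdge 𝒢 b a

/-- `𝒢'` is the least duplication-resolved tree `LR(𝒢)` obtained by contracting every
redundant edge of `𝒢`; `φ` is the corresponding quotient map. -/
def IsLROf (𝒢 : Recon Γ VG₁ VS S) (𝒢' : Recon Γ VG₂ VS S) (φ : VG₁ → VG₂) : Prop :=
  Function.Surjective φ ∧
  (∀ a b, φ a = φ b ↔ Relation.EqvGen (RedundantAdj 𝒢) a b) ∧
  (∀ x y, 𝒢'.tree.adj.Adj x y ↔
    ∃ a b, φ a = x ∧ φ b = y ∧ 𝒢.tree.adj.Adj a b ∧ ¬ RedundantAdj 𝒢 a b) ∧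
  𝒢'.tree.root = φ 𝒢.tree.root ∧
  (∀ g, 𝒢'.geneLeaf g = φ (𝒢.geneLeaf g)) ∧
  (∀ a, 𝒢'.μ (φ a) = 𝒢.μ a) ∧
  (∀ a, 𝒢'.lbl (φ a) = 𝒢.lbl a)

/-- Isomorphism of reconciled gene trees: a leaf-fixing bijection preserving edges,
species maps and event labels. -/
def ReconIso (𝒢₁ : Recon Γ VG₁ VS S) (𝒢₂ : Recon Γ VG₂ VS S) : Prop :=
  ∃ φ : VG₁ ≃ VG₂,
    (∀ g, φ (𝒢₁.geneLeaf g) = 𝒢₂.geneLeaf g) ∧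
    (∀ a b, 𝒢₂.tree.adj.Adj (φ a) (φ b) ↔ 𝒢₁.tree.adj.Adj a b) ∧
    (∀ v, 𝒢₂.μ (φ v) = 𝒢₁.μ v) ∧
    (∀ v, 𝒢₂.lbl (φ v) = 𝒢₁.lbl v)

/-- Exactly one gene per species: the gene set is the set of species leaves, and each gene
resides in its own species. -/
def OneGenePerSpecies (𝒢 : Recon {s : VS // IsLeaf S s} VG₁ VS S) : Prop :=
  ∀ g, 𝒢.μ (𝒢.geneLeaf g) = g.1

/-- A caterpillar: every internal node has at most one internal child. -/
def Caterpillar (T : RTree VS) : Prop :=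
  ∀ v, ¬ IsLeaf T v → {c | IsChild T c v ∧ ¬ IsLeaf T c}.ncard ≤ 1

namespace PLRAux

open SimpleGraph Walk

variable {V : Type*} [Fintype V] {T : RTree V} {a b c : V}

lemma conn (T : RTree V) : T.adj.Connected := T.isTree.isConnected

lemma anc_refl (T : RTree V) (a : V) : Anc T a a := by
  simp [Anc, SimpleGraph.dist_self]

lemma anc_root (T : RTree V) (b : V) : Anc T T.root b := by
  simp [Anc, SimpleGraph.dist_self]

lemma anc_antisymm (h1 : Anc T a b) (h2 : Anc T b a) : a = b := by
  unfold Anc at h1 h2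
  have : T.adj.dist a b = 0 := by omega
  exact ((conn T).dist_eq_zero_iff).mp this

lemma anc_trans (h1 : Anc T a b) (h2 : Anc T b c) : Anc T a c := by
  unfold Anc at *
  have t1 := (conn T).dist_triangle (u := T.root) (v := a) (w := c)
  have t2 := (conn T).dist_triangle (u := a) (v := b) (w := c)
  omega

lemma anc_depth_le (h : Anc T a b) : T.adj.dist T.root a ≤ T.adj.dist T.root b := by
  unfold Anc at h; omega

lemma anc_dist (h : Anc T a b) :
    T.adj.dist a b = T.adj.dist T.root b - T.adj.dist T.root a := by
  unfold Anc at h; omega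

lemma anc_of_eq_depth (h : Anc T a b) (hd : T.adj.dist T.root a = T.adj.dist T.root b) :
    a = b := by
  have := anc_dist h
  rw [hd] at this
  simp only [Nat.sub_self] at this
  exact ((conn T).dist_eq_zero_iff).mp this

/-- `a` is an ancestor of `b` iff `a` lies on any geodesic from root to `b`. -/
lemma anc_of_mem_geodesic {p : T.adj.Walk T.root b}
    (hp : p.length = T.adj.dist T.root b) (ha : a ∈ p.support) : Anc T a b := by
  have hspec := p.take_spec ha
  have hlen : (p.takeUntil a ha).length + (p.dropUntil a ha).length = p.length := by
    rw [← Walk.length_append, hspec]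
  have h1 : T.adj.dist T.root a ≤ (p.takeUntil a ha).length := dist_le _
  have h2 : T.adj.dist a b ≤ (p.dropUntil a ha).length := dist_le _
  have h3 := (conn T).dist_triangle (u := T.root) (v := a) (w := b)
  unfold Anc
  omega

lemma mem_geodesic_of_anc (h : Anc T a b) {p : T.adj.Walk T.root b}
    (hp : p.length = T.adj.dist T.root b) (hpath : p.IsPath) : a ∈ p.support := by
  obtain ⟨q1, hq1⟩ := (conn T).exists_walk_length_eq_dist T.root a
  obtain ⟨q2, hq2⟩ := (conn T).exists_walk_length_eq_dist a b
  have hlen : (q1.append q2).length = T.adj.dist T.root b := by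
    rw [Walk.length_append, hq1, hq2, h]
  have hq : (q1.append q2).IsPath := Walk.isPath_of_length_eq_dist _ hlen
  have : (⟨q1.append q2, hq⟩ : T.adj.Path T.root b) = ⟨p, hpath⟩ :=
    T.isTree.IsAcyclic.path_unique _ _
  have hsup : a ∈ (q1.append q2).support := by
    rw [Walk.mem_support_append_iff]; left; exact Walk.end_mem_support _
  rw [show p = q1.append q2 from (congrArg Subtype.val this).symm] at *
  exact hsup

/-- Two ancestors of the same node are comparable. -/
lemma anc_total (h1 : Anc T a c) (h2 : Anc T b c)
    (hd : T.adj.dist T.root a ≤ T.adj.dist T.root b) : Anc T a b := by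
  obtain ⟨p, hp⟩ := (conn T).exists_walk_length_eq_dist T.root c
  have hpath := Walk.isPath_of_length_eq_dist _ hp
  have hb : b ∈ p.support := mem_geodesic_of_anc h2 hp hpath
  -- p.takeUntil b is a geodesic from root to b
  have hspec := p.take_spec hb
  have hlen : (p.takeUntil b hb).length + (p.dropUntil b hb).length = p.length := by
    rw [← Walk.length_append, hspec]
  have htake : (p.takeUntil b hb).length = T.adj.dist T.root b := by
    have h1' : T.adj.dist T.root b ≤ (p.takeUntil b hb).length := dist_le _
    have h2' : T.adj.dist b c ≤ (p.dropUntil b hb).length := dist_le _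
    have := anc_dist h2
    unfold Anc at h2
    omega
  -- a is on geodesic to c; is a on takeUntil part?
  have ha : a ∈ p.support := mem_geodesic_of_anc h1 hp hpath
  rw [← hspec, Walk.mem_support_append_iff] at ha
  rcases ha with ha | ha
  · exact anc_of_mem_geodesic htake ha
  · -- a on the b→c part: then Anc b a, contradiction-ish with depths, forces a = b
    have hdrop : (p.dropUntil b hb).length = T.adj.dist b c := by
      have h2' : T.adj.dist b c ≤ (p.dropUntil b hb).length := dist_le _
      unfold Anc at h2
      omega
    -- dist b a + dist a c = dist b c along this geodesic
    have hba : T.adj.dist b c = T.adj.dist b a + T.adj.dist a c := by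
      have hspec2 := (p.dropUntil b hb).take_spec ha
      have hlen2 : ((p.dropUntil b hb).takeUntil a ha).length
          + ((p.dropUntil b hb).dropUntil a ha).length = (p.dropUntil b hb).length := by
        rw [← Walk.length_append, hspec2]
      have hx : T.adj.dist b a ≤ ((p.dropUntil b hb).takeUntil a ha).length := dist_le _
      have hy : T.adj.dist a c ≤ ((p.dropUntil b hb).dropUntil a ha).length := dist_le _
      have := (conn T).dist_triangle (u := b) (v := a) (w := c)
      omega
    -- now Anc b a
    have hanc : Anc T b a := by
      unfold Anc at *
      have t1 := (conn T).dist_triangle (u := T.root) (v := b) (w := a)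
      have t2 := (conn T).dist_triangle (u := T.root) (v := a) (w := c)
      have t3 := (conn T).dist_triangle (u := a) (v := b) (w := c)
      omega
    have : b = a := anc_of_eq_depth hanc (le_antisymm (anc_depth_le hanc) hd)
    rw [← this]; exact anc_refl T b

end PLRAux
namespace PLRAux

variable {V : Type*} [Fintype V] {T : RTree V} {a b c v x : V}

lemma child_depth (h : IsChild T c a) :
    T.adj.dist T.root c = T.adj.dist T.root a + 1 := by
  have h1 : T.adj.dist a c = 1 := SimpleGraph.dist_eq_one_iff_adj.mpr h.1.symm
  have := h.2
  unfold Anc at this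
  omega

lemma child_not_leaf (h : IsChild T c a) : ¬ IsLeaf T a := fun hl => hl c h

lemma depth_lt_of_anc (h : Anc T a b) (hne : a ≠ b) :
    T.adj.dist T.root a < T.adj.dist T.root b := by
  have hd : T.adj.dist a b ≠ 0 := fun h0 => hne (((conn T).dist_eq_zero_iff).mp h0)
  unfold Anc at h
  omega

/-- If `a` is a strict ancestor of `b`, some child of `a` is an ancestor of `b`. -/
lemma anc_child_exists (h : Anc T a b) (hne : a ≠ b) :
    ∃ c, IsChild T c a ∧ Anc T c b := by
  obtain ⟨p, hp⟩ := (conn T).exists_walk_length_eq_dist T.root b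
  have hpath := SimpleGraph.Walk.isPath_of_length_eq_dist _ hp
  have ha : a ∈ p.support := mem_geodesic_of_anc h hp hpath
  have hspec := p.take_spec ha
  have hlen : (p.takeUntil a ha).length + (p.dropUntil a ha).length = p.length := by
    rw [← SimpleGraph.Walk.length_append, hspec]
  have hdrop : (p.dropUntil a ha).length = T.adj.dist a b := by
    have h1 : T.adj.dist T.root a ≤ (p.takeUntil a ha).length := SimpleGraph.dist_le _
    have h2 : T.adj.dist a b ≤ (p.dropUntil a ha).length := SimpleGraph.dist_le _
    unfold Anc at h
    omega
  obtain ⟨c, hadj, q', hqq⟩ := SimpleGraph.Walk.exists_eq_cons_of_ne hne (p.dropUntil a ha)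
  have hcb : Anc T c b := by
    apply anc_of_mem_geodesic hp
    have : c ∈ (p.dropUntil a ha).support := by rw [hqq]; simp
    exact SimpleGraph.Walk.support_dropUntil_subset p ha this
  have hq'le : T.adj.dist c b ≤ q'.length := SimpleGraph.dist_le _
  have hqlen : (p.dropUntil a ha).length = q'.length + 1 := by rw [hqq]; simp
  have hcdist : T.adj.dist a c = 1 := SimpleGraph.dist_eq_one_iff_adj.mpr hadj
  have hdepthc : T.adj.dist T.root c = T.adj.dist T.root a + 1 := by
    have t1 := (conn T).dist_triangle (u := T.root) (v := a) (w := c)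
    have t2 := (conn T).dist_triangle (u := T.root) (v := c) (w := b)
    unfold Anc at h hcb
    omega
  have hanc : Anc T a c := by unfold Anc; omega
  exact ⟨c, ⟨hadj.symm, hanc⟩, hcb⟩

/-- A leaf has no strict descendants. -/
lemma leaf_anc_eq (hl : IsLeaf T v) (h : Anc T v x) : v = x := by
  by_contra hne
  obtain ⟨c, hc, _⟩ := anc_child_exists h hne
  exact hl c hc

/-- Every non-root vertex has a parent. -/
lemma parent_exists (h : v ≠ T.root) : ∃ a, IsChild T v a := by
  obtain ⟨p, hp⟩ := (conn T).exists_walk_length_eq_dist T.root v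
  obtain ⟨a, hadj, q', hqq⟩ := SimpleGraph.Walk.exists_eq_cons_of_ne h p.reverse
  have ha : a ∈ p.support := by
    have : a ∈ p.reverse.support := by rw [hqq]; simp
    rwa [SimpleGraph.Walk.support_reverse, List.mem_reverse] at this
  exact ⟨a, hadj, anc_of_mem_geodesic hp ha⟩

lemma parent_unique (h1 : IsChild T v a) (h2 : IsChild T v b) : a = b := by
  have d1 := child_depth h1
  have d2 := child_depth h2
  have := anc_total h1.2 h2.2 (by omega)
  exact anc_of_eq_depth this (by omega)

lemma root_not_child : ¬ IsChild T T.root a := by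
  rintro ⟨hadj, hanc⟩
  have := child_depth ⟨hadj, hanc⟩
  simp [SimpleGraph.dist_self] at this

/-- the parent of a strict descendant of `b` is also a descendant of `b`. -/
lemma parent_anc (hw : Anc T b v) (hne : v ≠ b) (hp : IsChild T v a) : Anc T b a := by
  have d := child_depth hp
  have := depth_lt_of_anc hw (Ne.symm hne)
  exact anc_total hw hp.2 (by omega)

/-- Every vertex has a leaf descendant. -/
lemma exists_leaf_desc (T : RTree V) (v : V) : ∃ x, IsLeaf T x ∧ Anc T v x := by
  classical
  obtain ⟨x, hx, hmax⟩ := Set.Finite.exists_maximalFor (fun y => T.adj.dist T.root y)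
    {y | Anc T v y} (Set.toFinite _) ⟨v, anc_refl T v⟩
  refine ⟨x, ?_, hx⟩
  intro c hc
  have hcx : Anc T v c := anc_trans hx hc.2
  have h1 := child_depth hc
  have h2 : T.adj.dist T.root c ≤ T.adj.dist T.root x :=
    hmax hcx (show T.adj.dist T.root x ≤ T.adj.dist T.root c by omega)
  omega

end PLRAux
namespace PLRAux

variable {V : Type*} [Fintype V] {T : RTree V} {a b c v w x : V}

/-- number of ancestors of `b` equals depth + 1. -/
lemma ncard_anc (T : RTree V) (b : V) :
    {a | Anc T a b}.ncard = T.adj.dist T.root b + 1 := by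
  classical
  obtain ⟨p, hp⟩ := (conn T).exists_walk_length_eq_dist T.root b
  have hpath := SimpleGraph.Walk.isPath_of_length_eq_dist _ hp
  have hset : {a | Anc T a b} = {a | a ∈ p.support} := by
    ext a
    exact ⟨fun h => mem_geodesic_of_anc h hp hpath, fun h => anc_of_mem_geodesic hp h⟩
  rw [hset]
  have : {a | a ∈ p.support}.ncard = p.support.toFinset.card := by
    rw [Set.ncard_eq_toFinset_card']
    congr 1
    ext a
    simp
  rw [this, List.toFinset_card_of_nodup hpath.support_nodup,
    SimpleGraph.Walk.length_support, hp]

section counting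

open Finset

variable (T)

/-- The children Finset. -/
noncomputable def csF (a : V) : Finset V := Set.toFinset (childSet T a)

lemma mem_csF : c ∈ csF T a ↔ IsChild T c a := by
  exact Set.mem_toFinset

lemma csF_card (a : V) : (csF T a).card = (childSet T a).ncard := by
  rw [Set.ncard_eq_toFinset_card']; rfl

variable {T}

lemma sum_children_card (A : Finset V) :
    ∑ a ∈ A, (csF T a).card = (A.biUnion (csF T)).card := by
  classical
  rw [Finset.card_biUnion]
  intro x hx y hy hxy
  rw [Function.onFun, Finset.disjoint_left]
  intro c hcx hcy
  exact hxy (parent_unique ((mem_csF T).mp hcx) ((mem_csF T).mp hcy))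

lemma mem_biUnion_csF {A : Finset V} :
    c ∈ A.biUnion (csF T) ↔ ∃ a ∈ A, IsChild T c a := by
  simp [mem_csF]

/-- Sum of child counts over the descendants of `w` equals (number of descendants) - 1. -/
lemma sum_children_desc (T : RTree V) (w : V) :
    ∑ a ∈ Finset.univ.filter (fun z => Anc T w z), (csF T a).card
      = (Finset.univ.filter (fun z => Anc T w z)).card - 1 := by
  classical
  rw [sum_children_card]
  congr 1
  have : (Finset.univ.filter (fun z => Anc T w z)).biUnion (csF T)
      = (Finset.univ.filter (fun z => Anc T w z)).erase w := by
    ext c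
    rw [mem_biUnion_csF, Finset.mem_erase, Finset.mem_filter]
    constructor
    · rintro ⟨a, ha, hc⟩
      rw [Finset.mem_filter] at ha
      have hwc : Anc T w c := anc_trans ha.2 hc.2
      refine ⟨?_, Finset.mem_univ c, hwc⟩
      rintro rfl
      have := anc_antisymm hc.2 ha.2
      subst this
      exact T.adj.irrefl hc.1
    · rintro ⟨hne, -, hanc⟩
      have hcr : c ≠ T.root := by
        rintro rfl
        exact hne (anc_antisymm (anc_root T w) hanc)
      obtain ⟨a, ha⟩ := parent_exists hcr
      exact ⟨a, Finset.mem_filter.mpr ⟨Finset.mem_univ a, parent_anc hanc hne ha⟩, ha⟩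
  rw [this, Finset.card_erase_of_mem]
  exact Finset.mem_filter.mpr ⟨Finset.mem_univ w, anc_refl T w⟩

/-- In a species tree, the number of internal descendants of `w` is one less than the
number of leaf descendants of `w`. -/
lemma internal_leaves_below {S : RTree V} (hS : IsSpeciesTree S) (w : V) :
    (Finset.univ.filter (fun z => ¬ IsLeaf S z ∧ Anc S w z)).card + 1
      = (Finset.univ.filter (fun z => IsLeaf S z ∧ Anc S w z)).card := by
  classical
  have hsum := sum_children_desc S w
  have hsplit : Finset.univ.filter (fun z => Anc S w z)
      = Finset.univ.filter (fun z => ¬ IsLeaf S z ∧ Anc S w z)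
        ∪ Finset.univ.filter (fun z => IsLeaf S z ∧ Anc S w z) := by
    ext z
    simp only [Finset.mem_filter, Finset.mem_union, Finset.mem_univ, true_and]
    tauto
  have hdisj : Disjoint (Finset.univ.filter (fun z => ¬ IsLeaf S z ∧ Anc S w z))
      (Finset.univ.filter (fun z => IsLeaf S z ∧ Anc S w z)) := by
    rw [Finset.disjoint_left]
    intro z hz1 hz2
    rw [Finset.mem_filter] at hz1 hz2
    exact hz1.2.1 hz2.2.1
  have hcards : (Finset.univ.filter (fun z => Anc S w z)).card
      = (Finset.univ.filter (fun z => ¬ IsLeaf S z ∧ Anc S w z)).card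
        + (Finset.univ.filter (fun z => IsLeaf S z ∧ Anc S w z)).card := by
    rw [hsplit, Finset.card_union_of_disjoint hdisj]
  have hval : ∑ a ∈ Finset.univ.filter (fun z => Anc S w z), (csF S a).card
      = 2 * (Finset.univ.filter (fun z => ¬ IsLeaf S z ∧ Anc S w z)).card := by
    rw [hsplit, Finset.sum_union hdisj]
    have h1 : ∀ a ∈ Finset.univ.filter (fun z => ¬ IsLeaf S z ∧ Anc S w z),
        (csF S a).card = 2 := by
      intro a ha
      rw [Finset.mem_filter] at ha
      rw [csF_card]
      exact hS a ha.2.1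
    have h2 : ∀ a ∈ Finset.univ.filter (fun z => IsLeaf S z ∧ Anc S w z),
        (csF S a).card = 0 := by
      intro a ha
      rw [Finset.mem_filter] at ha
      rw [csF_card]
      have : childSet S a = ∅ := by
        ext c; simp only [childSet, Set.mem_setOf_eq, Set.mem_empty_iff_false, iff_false]
        exact ha.2.1 c
      simp [this]
    rw [Finset.sum_congr rfl h1, Finset.sum_congr rfl h2]
    simp [Finset.sum_const, mul_comm]
  -- nonempty: w itself is a descendant
  have hmem : (Finset.univ.filter (fun z => Anc S w z)).Nonempty :=
    ⟨w, Finset.mem_filter.mpr ⟨Finset.mem_univ w, anc_refl S w⟩⟩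
  have hpos := Finset.card_pos.mpr hmem
  omega

end counting

/-- Existence of LCA for a nonempty set. -/
lemma exists_lca (T : RTree V) (X : Set V) (hne : X.Nonempty) : ∃ w, IsLCA T X w := by
  classical
  obtain ⟨x₀, hx₀⟩ := hne
  have hCA : (Set.Nonempty {w | ∀ x ∈ X, Anc T w x}) := ⟨T.root, fun x _ => anc_root T x⟩
  obtain ⟨w, hw, hmax⟩ := Set.Finite.exists_maximalFor (fun y => T.adj.dist T.root y)
    {w | ∀ x ∈ X, Anc T w x} (Set.toFinite _) hCA
  refine ⟨w, hw, ?_⟩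
  intro w' hw'
  rcases le_total (T.adj.dist T.root w') (T.adj.dist T.root w) with hle | hle
  · exact anc_total (hw' x₀ hx₀) (hw x₀ hx₀) hle
  · have heq := le_antisymm hle (hmax hw' hle)
    have := anc_total (hw x₀ hx₀) (hw' x₀ hx₀) hle
    rw [anc_of_eq_depth this heq]
    exact anc_refl T w'

lemma lca_unique {X : Set V} (h1 : IsLCA T X w) (h2 : IsLCA T X v) : w = v :=
  anc_antisymm (h2.2 w h1.1) (h1.2 v h2.1)

lemma lca_singleton {y : V} (h : IsLCA T {y} w) : w = y := by
  have h1 : Anc T w y := h.1 y rfl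
  have h2 : Anc T y w := h.2 y (fun x hx => hx ▸ anc_refl T y)
  exact anc_antisymm h2 h1 |>.symm

end PLRAux
namespace PLRAux

variable {V : Type*} [Fintype V] {T S : RTree V} {a b c v w x u : V}

/-- Two children of the same node that are ancestors of a common node are equal. -/
lemma child_anc_unique {c₁ c₂ : V} (h1 : IsChild T c₁ v) (h2 : IsChild T c₂ v)
    (ha1 : Anc T c₁ x) (ha2 : Anc T c₂ x) : c₁ = c₂ := by
  have d1 := child_depth h1
  have d2 := child_depth h2
  exact anc_of_eq_depth (anc_total ha1 ha2 (by omega)) (by omega)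

/-- A node with at least 2 children has two distinct children. -/
lemma exists_two_children (h : 2 ≤ (childSet T v).ncard) :
    ∃ c₁ c₂, IsChild T c₁ v ∧ IsChild T c₂ v ∧ c₁ ≠ c₂ := by
  have h1 : 1 < (childSet T v).ncard := by omega
  have h2 := (Set.one_lt_ncard_iff (hs := Set.toFinite (childSet T v))).mp h1
  obtain ⟨a, b, ha, hb, hab⟩ := h2
  exact ⟨a, b, ha, hb, hab⟩

/-- strict ancestors are internal. -/
lemma strict_anc_not_leaf (h : Anc T a b) (hne : a ≠ b) : ¬ IsLeaf T a := by
  obtain ⟨c, hc, -⟩ := anc_child_exists h hne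
  exact fun hl => hl c hc

section pairs

open Finset

variable (T) in
/-- The set of ordered pairs `(a, b)` of distinct internal nodes with `a` an ancestor of `b`. -/
noncomputable def ancPairs : Finset (V × V) :=
  Finset.univ.filter (fun p : V × V =>
    ¬ IsLeaf T p.1 ∧ ¬ IsLeaf T p.2 ∧ Anc T p.1 p.2 ∧ p.1 ≠ p.2)

variable (T) in
noncomputable def internalF : Finset V := Finset.univ.filter (fun v => ¬ IsLeaf T v)

variable (T) in
noncomputable def leafF : Finset V := Finset.univ.filter (fun v => IsLeaf T v)

lemma internalF_card_add_leafF_card :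
    (internalF T).card + (leafF T).card = Fintype.card V := by
  classical
  have := Finset.card_filter_add_card_filter_not
    (s := (Finset.univ : Finset V)) (p := fun v => IsLeaf T v)
  rw [internalF, leafF, Finset.card_univ] at *
  omega

/-- depth of any node = number of its strict ancestors (all of which are internal). -/
lemma depth_eq_card_strict_anc (T : RTree V) (b : V) :
    (Finset.univ.filter (fun a => ¬ IsLeaf T a ∧ Anc T a b ∧ a ≠ b)).card
      = T.adj.dist T.root b := by
  classical
  have h1 : (Finset.univ.filter (fun a => ¬ IsLeaf T a ∧ Anc T a b ∧ a ≠ b))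
      = (Finset.univ.filter (fun a => Anc T a b)).erase b := by
    ext a
    simp only [Finset.mem_filter, Finset.mem_erase, Finset.mem_univ, true_and]
    constructor
    · rintro ⟨-, h, hne⟩; exact ⟨hne, h⟩
    · rintro ⟨hne, h⟩; exact ⟨strict_anc_not_leaf h hne, h, hne⟩
  rw [h1, Finset.card_erase_of_mem (s := Finset.univ.filter (fun a => Anc T a b))
    (Finset.mem_filter.mpr ⟨Finset.mem_univ b, anc_refl T b⟩)]
  have h2 : (Finset.univ.filter (fun a => Anc T a b)).card = {a | Anc T a b}.ncard := by
    rw [Set.ncard_eq_toFinset_card']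
    congr 1
    ext a; simp
  rw [h2, ncard_anc]
  omega

/-- `Hsum` equals the number of strict ancestor pairs of internal nodes. -/
lemma card_fiber_snd (S : RTree V) (v : V) :
    ((ancPairs S).filter (fun p : V × V => p.2 = v)).card
      = if IsLeaf S v then 0 else S.adj.dist S.root v := by
  classical
  by_cases hv : IsLeaf S v
  · rw [if_pos hv]
    rw [Finset.card_eq_zero]
    ext p
    simp only [ancPairs, Finset.mem_filter, Finset.mem_univ, true_and,
      Finset.notMem_empty, iff_false]
    rintro ⟨⟨-, h2, -, -⟩, rfl⟩
    exact h2 hv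
  · rw [if_neg hv, ← depth_eq_card_strict_anc S v]
    apply Finset.card_bij (fun p _ => p.1)
    · rintro ⟨a, b⟩ hp
      simp only [ancPairs, Finset.mem_filter, Finset.mem_univ, true_and] at hp
      obtain ⟨⟨h1, h2, h3, h4⟩, rfl⟩ := hp
      simp only [Finset.mem_filter, Finset.mem_univ, true_and]
      exact ⟨h1, h3, h4⟩
    · rintro ⟨a, b⟩ ha ⟨a', b'⟩ hb h
      simp only [ancPairs, Finset.mem_filter, Finset.mem_univ, true_and] at ha hb
      simp only at h
      rw [Prod.ext_iff]
      exact ⟨h, ha.2.trans hb.2.symm⟩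
    · intro a ha
      simp only [Finset.mem_filter, Finset.mem_univ, true_and] at ha
      refine ⟨(a, v), ?_, rfl⟩
      simp only [ancPairs, Finset.mem_filter, Finset.mem_univ, true_and]
      exact ⟨⟨ha.1, hv, ha.2.1, ha.2.2⟩, trivial⟩

lemma card_fiber_fst (S : RTree V) (u : V) :
    ((ancPairs S).filter (fun p : V × V => p.1 = u)).card
      = (Finset.univ.filter (fun w => ¬ IsLeaf S w ∧ Anc S u w ∧ w ≠ u)).card := by
  classical
  apply Finset.card_bij (fun p _ => p.2)
  · rintro ⟨a, b⟩ hp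
    simp only [ancPairs, Finset.mem_filter, Finset.mem_univ, true_and] at hp
    obtain ⟨⟨h1, h2, h3, h4⟩, rfl⟩ := hp
    simp only [Finset.mem_filter, Finset.mem_univ, true_and]
    exact ⟨h2, h3, Ne.symm h4⟩
  · rintro ⟨a, b⟩ ha ⟨a', b'⟩ hb h
    simp only [ancPairs, Finset.mem_filter, Finset.mem_univ, true_and] at ha hb
    simp only at h
    rw [Prod.ext_iff]
    exact ⟨ha.2.trans hb.2.symm, h⟩
  · intro w hw
    simp only [Finset.mem_filter, Finset.mem_univ, true_and] at hw
    refine ⟨(u, w), ?_, rfl⟩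
    simp only [ancPairs, Finset.mem_filter, Finset.mem_univ, true_and]
    exact ⟨⟨strict_anc_not_leaf hw.2.1 (Ne.symm hw.2.2), hw.1, hw.2.1, Ne.symm hw.2.2⟩, trivial⟩

lemma hsum_eq_ancPairs_card (S : RTree V) : Hsum S = (ancPairs S).card := by
  classical
  rw [Hsum]
  rw [Finset.card_eq_sum_card_fiberwise
    (f := fun p : V × V => p.2) (s := ancPairs S) (t := Finset.univ)
    (fun x _ => Finset.mem_univ _)]
  exact Finset.sum_congr rfl (fun v _ => (card_fiber_snd S v).symm)

/-- `Hsum` also equals the sum over internal `u` of the number of internal strict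
descendants of `u`. -/
lemma hsum_eq_sum_desc (S : RTree V) :
    Hsum S = ∑ u ∈ internalF S,
      (Finset.univ.filter (fun w => ¬ IsLeaf S w ∧ Anc S u w ∧ w ≠ u)).card := by
  classical
  rw [hsum_eq_ancPairs_card]
  rw [Finset.card_eq_sum_card_fiberwise
    (f := fun p : V × V => p.1) (s := ancPairs S) (t := internalF S)
    (fun x hx => by
      simp only [Finset.mem_coe, ancPairs, Finset.mem_filter, Finset.mem_univ, true_and] at hx
      exact Finset.mem_filter.mpr ⟨Finset.mem_univ _, hx.1⟩)]
  exact Finset.sum_congr rfl (fun u _ => card_fiber_fst S u)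

/-- Twice `Hsum` is at most `#internal * (#internal - 1)`. -/
lemma two_hsum_le (S : RTree V) :
    2 * Hsum S ≤ (internalF S).card * ((internalF S).card - 1) := by
  classical
  rw [hsum_eq_ancPairs_card]
  have hsub : ancPairs S ∪ (ancPairs S).image Prod.swap ⊆ (internalF S).offDiag := by
    intro p hp
    rw [Finset.mem_union] at hp
    have key : ∀ q ∈ ancPairs S, q ∈ (internalF S).offDiag := by
      rintro ⟨a, b⟩ hq
      simp only [ancPairs, Finset.mem_filter, Finset.mem_univ, true_and] at hq
      simp only [Finset.mem_offDiag, internalF, Finset.mem_filter, Finset.mem_univ, true_and]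
      exact ⟨hq.1, hq.2.1, hq.2.2.2⟩
    rcases hp with hp | hp
    · exact key p hp
    · rw [Finset.mem_image] at hp
      obtain ⟨q, hq, rfl⟩ := hp
      have := key q hq
      simp only [Finset.mem_offDiag] at this ⊢
      exact ⟨this.2.1, this.1, Ne.symm this.2.2⟩
  have hdisj : Disjoint (ancPairs S) ((ancPairs S).image Prod.swap) := by
    rw [Finset.disjoint_left]
    rintro ⟨a, b⟩ hp hq
    simp only [ancPairs, Finset.mem_filter, Finset.mem_univ, true_and] at hp
    rw [Finset.mem_image] at hq
    obtain ⟨⟨a', b'⟩, hq, heq⟩ := hq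
    simp only [ancPairs, Finset.mem_filter, Finset.mem_univ, true_and] at hq
    simp only [Prod.swap_prod_mk, Prod.mk.injEq] at heq
    obtain ⟨rfl, rfl⟩ := heq
    exact hp.2.2.2 (anc_antisymm hp.2.2.1 hq.2.2.1)
  have hcard := Finset.card_le_card hsub
  rw [Finset.card_union_of_disjoint hdisj,
    Finset.card_image_of_injective _ Prod.swap_injective, Finset.offDiag_card] at hcard
  rw [← Nat.pred_eq_sub_one, Nat.mul_pred]
  omega

end pairs

end PLRAux
namespace PLRAux

variable {V : Type*} [Fintype V] {T S : RTree V} {a b c v w x u : V}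

/-- In a caterpillar, any two internal nodes are comparable. -/
lemma cat_comparable (hcat : Caterpillar S) (hu : ¬ IsLeaf S u) (hw : ¬ IsLeaf S w) :
    Anc S u w ∨ Anc S w u := by
  by_contra hcon
  push_neg at hcon
  obtain ⟨hnuw, hnwu⟩ := hcon
  obtain ⟨z, hz⟩ := exists_lca S {u, w} ⟨u, by simp⟩
  have hzu : Anc S z u := hz.1 u (by simp)
  have hzw : Anc S z w := hz.1 w (by simp)
  have hzu' : z ≠ u := by rintro rfl; exact hnuw hzw
  have hzw' : z ≠ w := by rintro rfl; exact hnwu hzu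
  obtain ⟨cu, hcu, hcuu⟩ := anc_child_exists hzu hzu'
  obtain ⟨cw, hcw, hcww⟩ := anc_child_exists hzw hzw'
  have hne : cu ≠ cw := by
    rintro rfl
    have hca : ∀ x ∈ ({u, w} : Set V), Anc S cu x := by
      rintro x (rfl | rfl)
      · exact hcuu
      · exact hcww
    have h1 : Anc S cu z := hz.2 cu hca
    have h2 := anc_antisymm h1 hcu.2
    have := child_depth hcu
    rw [h2] at this
    omega
  have hcuint : ¬ IsLeaf S cu := by
    by_cases h : cu = u
    · rwa [h]
    · exact strict_anc_not_leaf hcuu h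
  have hcwint : ¬ IsLeaf S cw := by
    by_cases h : cw = w
    · rwa [h]
    · exact strict_anc_not_leaf hcww h
  have hzint : ¬ IsLeaf S z := child_not_leaf hcu
  have hle := hcat z hzint
  have : 1 < {c | IsChild S c z ∧ ¬ IsLeaf S c}.ncard := by
    rw [Set.one_lt_ncard_iff (hs := Set.toFinite _)]
    exact ⟨cu, cw, ⟨hcu, hcuint⟩, ⟨hcw, hcwint⟩, hne⟩
  omega

/-- For a caterpillar, twice `Hsum` equals `#internal * (#internal - 1)`. -/
lemma cat_two_hsum (hcat : Caterpillar S) :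
    2 * Hsum S = (internalF S).card * ((internalF S).card - 1) := by
  classical
  rw [hsum_eq_ancPairs_card]
  have hsub : (internalF S).offDiag ⊆ ancPairs S ∪ (ancPairs S).image Prod.swap := by
    rintro ⟨a, b⟩ hp
    simp only [Finset.mem_offDiag, internalF, Finset.mem_filter, Finset.mem_univ,
      true_and] at hp
    obtain ⟨ha, hb, hab⟩ := hp
    rcases cat_comparable hcat ha hb with h | h
    · apply Finset.mem_union_left
      simp only [ancPairs, Finset.mem_filter, Finset.mem_univ, true_and]
      exact ⟨ha, hb, h, hab⟩
    · apply Finset.mem_union_right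
      rw [Finset.mem_image]
      refine ⟨(b, a), ?_, rfl⟩
      simp only [ancPairs, Finset.mem_filter, Finset.mem_univ, true_and]
      exact ⟨hb, ha, h, Ne.symm hab⟩
  have hsub2 : ancPairs S ∪ (ancPairs S).image Prod.swap ⊆ (internalF S).offDiag := by
    intro p hp
    rw [Finset.mem_union] at hp
    have key : ∀ q ∈ ancPairs S, q ∈ (internalF S).offDiag := by
      rintro ⟨a, b⟩ hq
      simp only [ancPairs, Finset.mem_filter, Finset.mem_univ, true_and] at hq
      simp only [Finset.mem_offDiag, internalF, Finset.mem_filter, Finset.mem_univ, true_and]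
      exact ⟨hq.1, hq.2.1, hq.2.2.2⟩
    rcases hp with hp | hp
    · exact key p hp
    · rw [Finset.mem_image] at hp
      obtain ⟨q, hq, rfl⟩ := hp
      have := key q hq
      simp only [Finset.mem_offDiag] at this ⊢
      exact ⟨this.2.1, this.1, Ne.symm this.2.2⟩
  have heq := Finset.Subset.antisymm hsub hsub2
  have hdisj : Disjoint (ancPairs S) ((ancPairs S).image Prod.swap) := by
    rw [Finset.disjoint_left]
    rintro ⟨a, b⟩ hp hq
    simp only [ancPairs, Finset.mem_filter, Finset.mem_univ, true_and] at hp
    rw [Finset.mem_image] at hq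
    obtain ⟨⟨a', b'⟩, hq, heq'⟩ := hq
    simp only [ancPairs, Finset.mem_filter, Finset.mem_univ, true_and] at hq
    simp only [Prod.swap_prod_mk, Prod.mk.injEq] at heq'
    obtain ⟨rfl, rfl⟩ := heq'
    exact hp.2.2.2 (anc_antisymm hp.2.2.1 hq.2.2.1)
  have hcard := congrArg Finset.card heq
  rw [Finset.offDiag_card, Finset.card_union_of_disjoint hdisj,
    Finset.card_image_of_injective _ Prod.swap_injective] at hcard
  rw [← Nat.pred_eq_sub_one, Nat.mul_pred]
  omega

lemma numLeaves_eq_leafF_card (T : RTree V) : numLeaves T = (leafF T).card := by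
  classical
  rw [numLeaves, Set.ncard_eq_toFinset_card']
  congr 1
  ext v
  simp [leafF]

/-- In a species tree, `#internal + 1 = #leaves`. -/
lemma species_internal_card (hS : IsSpeciesTree S) :
    (internalF S).card + 1 = (leafF S).card := by
  classical
  have h := internal_leaves_below hS S.root
  have h1 : Finset.univ.filter (fun z => ¬ IsLeaf S z ∧ Anc S S.root z) = internalF S := by
    ext z
    simp only [Finset.mem_filter, Finset.mem_univ, true_and, internalF]
    exact ⟨fun h => h.1, fun h => ⟨h, anc_root S z⟩⟩
  have h2 : Finset.univ.filter (fun z => IsLeaf S z ∧ Anc S S.root z) = leafF S := by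
    ext z
    simp only [Finset.mem_filter, Finset.mem_univ, true_and, leafF]
    exact ⟨fun h => h.1, fun h => ⟨h, anc_root S z⟩⟩
  rw [h1, h2] at h
  exact h

/-- In a tree where every internal node has ≥ 2 children, `#internal + 1 ≤ #leaves`. -/
lemma internal_card_le (T : RTree V) (h2 : ∀ v, ¬ IsLeaf T v → 2 ≤ (childSet T v).ncard) :
    (internalF T).card + 1 ≤ (leafF T).card := by
  classical
  have hsum := sum_children_desc T T.root
  have hall : Finset.univ.filter (fun z => Anc T T.root z) = Finset.univ := by
    ext z; simp [anc_root T z]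
  rw [hall] at hsum
  have hge : 2 * (internalF T).card ≤ ∑ a : V, (csF T a).card := by
    have : ∑ a ∈ internalF T, (csF T a).card ≤ ∑ a : V, (csF T a).card :=
      Finset.sum_le_sum_of_subset (Finset.subset_univ _)
    have h1 : ∀ a ∈ internalF T, 2 ≤ (csF T a).card := by
      intro a ha
      rw [csF_card]
      exact h2 a (Finset.mem_filter.mp ha).2
    calc 2 * (internalF T).card = ∑ _a ∈ internalF T, 2 := by
          rw [Finset.sum_const, smul_eq_mul, mul_comm]
      _ ≤ ∑ a ∈ internalF T, (csF T a).card := Finset.sum_le_sum h1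
      _ ≤ ∑ a : V, (csF T a).card := this
  have hcards := internalF_card_add_leafF_card (T := T)
  have : 0 < Fintype.card V := Fintype.card_pos_iff.mpr ⟨T.root⟩
  rw [hsum, Finset.card_univ] at hge
  omega

end PLRAux
namespace PLRAux

variable {Γ : Type*} {V VG VG₂ : Type*} [Fintype V] [Fintype VG] [Fintype VG₂]
  {S : RTree V} {𝒢 : Recon Γ VG V S} {v : VG}

lemma geneLeaf_isLeaf (𝒢 : Recon Γ VG V S) (g : Γ) : IsLeaf 𝒢.tree (𝒢.geneLeaf g) :=
  (𝒢.geneLeaf_range _).mpr ⟨g, rfl⟩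

lemma leafF_card_eq (𝒢 : Recon Γ VG V S) [Fintype Γ] :
    (leafF 𝒢.tree).card = Fintype.card Γ := by
  classical
  have : leafF 𝒢.tree = Finset.univ.image 𝒢.geneLeaf := by
    ext x
    simp only [leafF, Finset.mem_filter, Finset.mem_univ, true_and, Finset.mem_image]
    rw [𝒢.geneLeaf_range]
  rw [this, Finset.card_image_of_injective _ 𝒢.geneLeaf_inj, Finset.card_univ]

lemma gclade_self (𝒢 : Recon Γ VG V S) (g : Γ) : g ∈ gclade 𝒢 (𝒢.geneLeaf g) :=
  anc_refl _ _

lemma gclade_leaf (𝒢 : Recon Γ VG V S) (g : Γ) : gclade 𝒢 (𝒢.geneLeaf g) = {g} := by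
  ext g'
  simp only [gclade, Set.mem_setOf_eq, Set.mem_singleton_iff]
  constructor
  · intro h
    exact (𝒢.geneLeaf_inj (leaf_anc_eq (geneLeaf_isLeaf 𝒢 g) h)).symm
  · rintro rfl
    exact anc_refl _ _

lemma gclade_nonempty (𝒢 : Recon Γ VG V S) (v : VG) : (gclade 𝒢 v).Nonempty := by
  obtain ⟨x, hx, hvx⟩ := exists_leaf_desc 𝒢.tree v
  obtain ⟨g, rfl⟩ := (𝒢.geneLeaf_range x).mp hx
  exact ⟨g, hvx⟩

lemma gclade_mono {c : VG} (h : Anc 𝒢.tree v c) : gclade 𝒢 c ⊆ gclade 𝒢 v :=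
  fun _ hg => anc_trans h hg

/-- an internal node of a gene tree has two distinct genes below it. -/
lemma gclade_two (𝒢 : Recon Γ VG V S) (hv : ¬ IsLeaf 𝒢.tree v) :
    ∃ g₁ g₂, g₁ ∈ gclade 𝒢 v ∧ g₂ ∈ gclade 𝒢 v ∧ g₁ ≠ g₂ := by
  obtain ⟨c₁, c₂, hc₁, hc₂, hne⟩ := exists_two_children (𝒢.internal_children v hv)
  obtain ⟨x₁, hx₁, hcx₁⟩ := exists_leaf_desc 𝒢.tree c₁
  obtain ⟨x₂, hx₂, hcx₂⟩ := exists_leaf_desc 𝒢.tree c₂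
  obtain ⟨g₁, rfl⟩ := (𝒢.geneLeaf_range x₁).mp hx₁
  obtain ⟨g₂, rfl⟩ := (𝒢.geneLeaf_range x₂).mp hx₂
  refine ⟨g₁, g₂, anc_trans hc₁.2 hcx₁, anc_trans hc₂.2 hcx₂, ?_⟩
  rintro rfl
  exact hne (child_anc_unique hc₁ hc₂ hcx₁ hcx₂)

/-- μ(v) is an ancestor of the species of every gene below v. -/
lemma mu_anc_gene (𝒢 : Recon Γ VG V S) {g : Γ} (hg : g ∈ gclade 𝒢 v) :
    Anc S (𝒢.μ v) (𝒢.μ (𝒢.geneLeaf g)) :=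
  𝒢.time_consistent _ _ hg

/-- the lca-map image of a leaf is the corresponding leaf. -/
lemma lcaMap_leaf {𝒢₂ : Recon Γ VG₂ V S} {m : VG → VG₂}
    (hm : IsLcaMap 𝒢 𝒢₂ m) (g : Γ) : m (𝒢.geneLeaf g) = 𝒢₂.geneLeaf g := by
  have h := hm (𝒢.geneLeaf g)
  rw [gclade_leaf] at h
  rw [Set.image_singleton] at h
  exact lca_singleton h

lemma lcaMap_anc {𝒢₂ : Recon Γ VG₂ V S} {m : VG → VG₂} (hm : IsLcaMap 𝒢 𝒢₂ m)
    {g : Γ} (hg : g ∈ gclade 𝒢 v) : Anc 𝒢₂.tree (m v) (𝒢₂.geneLeaf g) :=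
  (hm v).1 _ ⟨g, hg, rfl⟩

/-- two nodes that are both ancestors of `s` are at distance at most `depth s`. -/
lemma dist_le_depth_of_anc {a b s : V} {T : RTree V} (h1 : Anc T a s) (h2 : Anc T b s) :
    T.adj.dist a b ≤ T.adj.dist T.root s := by
  rcases le_total (T.adj.dist T.root a) (T.adj.dist T.root b) with hle | hle
  · have h := anc_total h1 h2 hle
    have := anc_dist h
    have := anc_depth_le h2
    omega
  · have h := anc_total h2 h1 hle
    have := anc_dist h
    have := anc_depth_le h1
    rw [SimpleGraph.dist_comm]
    omega

end PLRAux
namespace PLRAux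

variable {VS VG VG₂ : Type*} [Fintype VS] [Fintype VG] [Fintype VG₂] {S : RTree VS}

local notation "Γ' " S => {s // IsLeaf S s}

variable {𝒢 : Recon {s // IsLeaf S s} VG VS S} {v : VG}

/-- The species set below a gene-tree node. -/
def specSet (𝒢 : Recon {s // IsLeaf S s} VG VS S) (v : VG) : Set VS :=
  Subtype.val '' gclade 𝒢 v

/-- A chosen LCA in `S` of the species below a gene-tree node. -/
noncomputable def svF (𝒢 : Recon {s // IsLeaf S s} VG VS S) (v : VG) : VS :=
  Classical.choose (exists_lca S (specSet 𝒢 v)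
    ((gclade_nonempty 𝒢 v).image Subtype.val))

lemma svF_spec (𝒢 : Recon {s // IsLeaf S s} VG VS S) (v : VG) :
    IsLCA S (specSet 𝒢 v) (svF 𝒢 v) :=
  Classical.choose_spec (exists_lca S (specSet 𝒢 v)
    ((gclade_nonempty 𝒢 v).image Subtype.val))

lemma svF_anc {g : Γ' S} (hg : g ∈ gclade 𝒢 v) : Anc S (svF 𝒢 v) g.1 :=
  (svF_spec 𝒢 v).1 g.1 ⟨g, hg, rfl⟩

lemma anc_svF {w : VS} (h : ∀ g ∈ gclade 𝒢 v, Anc S w g.1) : Anc S w (svF 𝒢 v) := by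
  refine (svF_spec 𝒢 v).2 w ?_
  rintro s ⟨g, hg, rfl⟩
  exact h g hg

lemma mu_anc_svF (hOne : OneGenePerSpecies 𝒢) (v : VG) : Anc S (𝒢.μ v) (svF 𝒢 v) := by
  refine anc_svF (fun g hg => ?_)
  have := mu_anc_gene 𝒢 hg
  rwa [hOne g] at this

lemma lcaMap_mu_anc_svF {𝒢₂ : Recon {s // IsLeaf S s} VG₂ VS S} {m : VG → VG₂}
    (hOne₂ : OneGenePerSpecies 𝒢₂) (hm : IsLcaMap 𝒢 𝒢₂ m) (v : VG) :
    Anc S (𝒢₂.μ (m v)) (svF 𝒢 v) := by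
  refine anc_svF (fun g hg => ?_)
  have h1 := lcaMap_anc hm hg
  have h2 := 𝒢₂.time_consistent _ _ h1
  rwa [hOne₂ g] at h2

lemma dist_mu_le (hOne₂ : OneGenePerSpecies 𝒢) {𝒢₂ : Recon {s // IsLeaf S s} VG₂ VS S}
    {m : VG → VG₂} (hOne₂' : OneGenePerSpecies 𝒢₂) (hm : IsLcaMap 𝒢 𝒢₂ m) (v : VG) :
    S.adj.dist (𝒢.μ v) (𝒢₂.μ (m v)) ≤ S.adj.dist S.root (svF 𝒢 v) :=
  dist_le_depth_of_anc (mu_anc_svF hOne₂ v) (lcaMap_mu_anc_svF hOne₂' hm v)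

lemma svF_internal (hv : ¬ IsLeaf 𝒢.tree v) : ¬ IsLeaf S (svF 𝒢 v) := by
  obtain ⟨g₁, g₂, hg₁, hg₂, hne⟩ := gclade_two 𝒢 hv
  intro hleaf
  have h1 := leaf_anc_eq hleaf (svF_anc hg₁)
  have h2 := leaf_anc_eq hleaf (svF_anc hg₂)
  exact hne (Subtype.ext (h1 ▸ h2 ▸ rfl))

/-- Forest bound: the number of internal gene-tree nodes whose species-lca is below `c`
is less than the number of species leaves below `c`. -/
lemma forest_bound (hOne : OneGenePerSpecies 𝒢) (c : VS)
    (hne : (Finset.univ.filter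
      (fun v : VG => ¬ IsLeaf 𝒢.tree v ∧ Anc S c (svF 𝒢 v))).Nonempty) :
    (Finset.univ.filter (fun v : VG => ¬ IsLeaf 𝒢.tree v ∧ Anc S c (svF 𝒢 v))).card + 1
      ≤ (Finset.univ.filter (fun x => IsLeaf S x ∧ Anc S c x)).card := by
  classical
  set D := Finset.univ.filter
    (fun v : VG => ¬ IsLeaf 𝒢.tree v ∧ Anc S c (svF 𝒢 v)) with hD
  obtain ⟨v₀, hv₀, hv₀min⟩ := D.exists_min_image (fun v => 𝒢.tree.adj.dist 𝒢.tree.root v) hne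
  set E := (leafF 𝒢.tree).filter (fun x => Anc S c (𝒢.μ x)) with hE
  -- every gene below a node of D has species below c
  have hgene : ∀ v ∈ D, ∀ g ∈ gclade 𝒢 v, Anc S c g.1 := by
    intro v hv g hg
    rw [hD, Finset.mem_filter] at hv
    exact anc_trans hv.2.2 (svF_anc hg)
  -- the children of nodes of D
  have hsub : D.biUnion (csF 𝒢.tree) ⊆ (D.erase v₀) ∪ E := by
    intro c' hc'
    rw [mem_biUnion_csF] at hc'
    obtain ⟨v, hvD, hch⟩ := hc'
    rw [Finset.mem_union]
    by_cases hl : IsLeaf 𝒢.tree c'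
    · right
      obtain ⟨g, rfl⟩ := (𝒢.geneLeaf_range c').mp hl
      rw [hE, Finset.mem_filter]
      refine ⟨Finset.mem_filter.mpr ⟨Finset.mem_univ _, hl⟩, ?_⟩
      rw [hOne g]
      exact hgene v hvD g (gclade_mono hch.2 (gclade_self 𝒢 g))
    · left
      rw [Finset.mem_erase]
      constructor
      · intro heq
        have hd := child_depth hch
        have hmin := hv₀min v hvD
        rw [heq] at hd
        rw [hD, Finset.mem_filter] at hvD
        omega
      · rw [hD, Finset.mem_filter]
        refine ⟨Finset.mem_univ _, hl, ?_⟩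
        refine anc_svF (fun g hg => ?_)
        exact hgene v hvD g (gclade_mono hch.2 hg)
  have hEcard : E.card ≤ (Finset.univ.filter (fun x => IsLeaf S x ∧ Anc S c x)).card := by
    apply Finset.card_le_card_of_injOn (fun x => 𝒢.μ x)
    · intro x hx
      rw [hE, Finset.mem_coe, Finset.mem_filter, leafF, Finset.mem_filter] at hx
      exact Finset.mem_filter.mpr ⟨Finset.mem_univ _,
        𝒢.leaf_species x hx.1.2, hx.2⟩
    · intro x hx y hy hxy
      have hx' : x ∈ E := hx
      have hy' : y ∈ E := hy
      rw [hE, Finset.mem_filter, leafF, Finset.mem_filter] at hx' hy'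
      clear hx hy
      rename' hx' => hx, hy' => hy
      obtain ⟨g, rfl⟩ := (𝒢.geneLeaf_range x).mp hx.1.2
      obtain ⟨g', rfl⟩ := (𝒢.geneLeaf_range y).mp hy.1.2
      simp only at hxy
      rw [hOne g, hOne g'] at hxy
      rw [Subtype.ext hxy]
  have hlow : 2 * D.card ≤ ∑ v ∈ D, (csF 𝒢.tree v).card := by
    calc 2 * D.card = ∑ _v ∈ D, 2 := by rw [Finset.sum_const, smul_eq_mul, mul_comm]
      _ ≤ _ := by
          apply Finset.sum_le_sum
          intro v hv
          rw [csF_card]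
          rw [hD, Finset.mem_filter] at hv
          exact 𝒢.internal_children v hv.2.1
  have hkey := sum_children_card (T := 𝒢.tree) D
  have hup := Finset.card_le_card hsub
  have hunion := Finset.card_union_le (D.erase v₀) E
  have herase : (D.erase v₀).card = D.card - 1 := Finset.card_erase_of_mem hv₀
  have hpos : 1 ≤ D.card := Finset.card_pos.mpr hne
  omega

end PLRAux
namespace PLRAux

variable {VS VG VG₂ : Type*} [Fintype VS] [Fintype VG] [Fintype VG₂] {S : RTree VS}
  {𝒢 : Recon {s // IsLeaf S s} VG VS S}

/-- Count bound: the number of internal gene nodes whose species-lca lies strictly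
below `u` is at most the number of internal species nodes strictly below `u`. -/
lemma cnt_le (hS : IsSpeciesTree S) (hOne : OneGenePerSpecies 𝒢) {u : VS}
    (hu : ¬ IsLeaf S u) :
    (Finset.univ.filter (fun v : VG =>
        ¬ IsLeaf 𝒢.tree v ∧ Anc S u (svF 𝒢 v) ∧ u ≠ svF 𝒢 v)).card
      ≤ (Finset.univ.filter (fun w => ¬ IsLeaf S w ∧ Anc S u w ∧ w ≠ u)).card := by
  classical
  obtain ⟨c₁, c₂, hc₁, hc₂, hcne⟩ := exists_two_children (le_of_eq (hS u hu).symm)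
  have hchildset : childSet S u = {c₁, c₂} := by
    refine (Set.eq_of_subset_of_ncard_le ?_ ?_ (Set.toFinite _)).symm
    · rintro c (rfl | rfl)
      exacts [hc₁, hc₂]
    · rw [hS u hu, Set.ncard_pair hcne]
  set D₁ := Finset.univ.filter
    (fun v : VG => ¬ IsLeaf 𝒢.tree v ∧ Anc S c₁ (svF 𝒢 v)) with hD₁
  set D₂ := Finset.univ.filter
    (fun v : VG => ¬ IsLeaf 𝒢.tree v ∧ Anc S c₂ (svF 𝒢 v)) with hD₂
  have hsub : Finset.univ.filter (fun v : VG =>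
      ¬ IsLeaf 𝒢.tree v ∧ Anc S u (svF 𝒢 v) ∧ u ≠ svF 𝒢 v) ⊆ D₁ ∪ D₂ := by
    intro v hv
    rw [Finset.mem_filter] at hv
    obtain ⟨-, hint, hanc, hne⟩ := hv
    obtain ⟨c, hc, hcanc⟩ := anc_child_exists hanc hne
    have : c ∈ ({c₁, c₂} : Set VS) := hchildset ▸ hc
    rw [Finset.mem_union]
    rcases this with rfl | rfl
    · exact Or.inl (Finset.mem_filter.mpr ⟨Finset.mem_univ _, hint, hcanc⟩)
    · exact Or.inr (Finset.mem_filter.mpr ⟨Finset.mem_univ _, hint, hcanc⟩)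
  have hdisj : Disjoint D₁ D₂ := by
    rw [Finset.disjoint_left]
    intro v h1 h2
    rw [hD₁, Finset.mem_filter] at h1
    rw [hD₂, Finset.mem_filter] at h2
    exact hcne (child_anc_unique hc₁ hc₂ h1.2.2 h2.2.2)
  set L₁ := Finset.univ.filter (fun x => IsLeaf S x ∧ Anc S c₁ x) with hL₁
  set L₂ := Finset.univ.filter (fun x => IsLeaf S x ∧ Anc S c₂ x) with hL₂
  set Lu := Finset.univ.filter (fun x => IsLeaf S x ∧ Anc S u x) with hLu
  have hLdisj : Disjoint L₁ L₂ := by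
    rw [Finset.disjoint_left]
    intro x h1 h2
    rw [hL₁, Finset.mem_filter] at h1
    rw [hL₂, Finset.mem_filter] at h2
    exact hcne (child_anc_unique hc₁ hc₂ h1.2.2 h2.2.2)
  have hLsub : L₁ ∪ L₂ ⊆ Lu := by
    intro x hx
    rw [Finset.mem_union] at hx
    rw [hLu, Finset.mem_filter]
    rcases hx with hx | hx
    · rw [hL₁, Finset.mem_filter] at hx
      exact ⟨Finset.mem_univ _, hx.2.1, anc_trans hc₁.2 hx.2.2⟩
    · rw [hL₂, Finset.mem_filter] at hx
      exact ⟨Finset.mem_univ _, hx.2.1, anc_trans hc₂.2 hx.2.2⟩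
  have hLcard : L₁.card + L₂.card ≤ Lu.card := by
    rw [← Finset.card_union_of_disjoint hLdisj]
    exact Finset.card_le_card hLsub
  have hL₁pos : 1 ≤ L₁.card := by
    obtain ⟨x, hx, hax⟩ := exists_leaf_desc S c₁
    exact Finset.card_pos.mpr ⟨x, Finset.mem_filter.mpr ⟨Finset.mem_univ _, hx, hax⟩⟩
  have hL₂pos : 1 ≤ L₂.card := by
    obtain ⟨x, hx, hax⟩ := exists_leaf_desc S c₂
    exact Finset.card_pos.mpr ⟨x, Finset.mem_filter.mpr ⟨Finset.mem_univ _, hx, hax⟩⟩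
  have hb₁ : D₁.card ≤ L₁.card - 1 := by
    rcases Finset.eq_empty_or_nonempty D₁ with h | h
    · rw [h]; simp
    · have h2 := forest_bound hOne c₁ h
      rw [← hD₁, ← hL₁] at h2
      omega
  have hb₂ : D₂.card ≤ L₂.card - 1 := by
    rcases Finset.eq_empty_or_nonempty D₂ with h | h
    · rw [h]; simp
    · have h2 := forest_bound hOne c₂ h
      rw [← hD₂, ← hL₂] at h2
      omega
  -- the target equals Lu.card - 2
  have htgt : (Finset.univ.filter (fun w => ¬ IsLeaf S w ∧ Anc S u w ∧ w ≠ u)).card + 2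
      = Lu.card := by
    have h1 := internal_leaves_below hS u
    rw [← hLu] at h1
    have h2 : Finset.univ.filter (fun w => ¬ IsLeaf S w ∧ Anc S u w ∧ w ≠ u)
        = (Finset.univ.filter (fun w => ¬ IsLeaf S w ∧ Anc S u w)).erase u := by
      ext w
      simp only [Finset.mem_filter, Finset.mem_erase, Finset.mem_univ, true_and]
      tauto
    have h3 : u ∈ Finset.univ.filter (fun w => ¬ IsLeaf S w ∧ Anc S u w) :=
      Finset.mem_filter.mpr ⟨Finset.mem_univ _, hu, anc_refl S u⟩
    rw [h2, Finset.card_erase_of_mem h3]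
    have h4 := Finset.card_pos.mpr ⟨u, h3⟩
    omega
  have hCle := Finset.card_le_card hsub
  have hCunion := Finset.card_union_le D₁ D₂
  omega

/-- The sum over internal gene-tree nodes of the depths of their species-lcas is at
most `Hsum S`. -/
lemma sum_svF_depth_le (hS : IsSpeciesTree S) (hOne : OneGenePerSpecies 𝒢) :
    ∑ v ∈ internalF 𝒢.tree, S.adj.dist S.root (svF 𝒢 v) ≤ Hsum S := by
  classical
  set Q := Finset.univ.filter (fun p : VG × VS =>
    ¬ IsLeaf 𝒢.tree p.1 ∧ ¬ IsLeaf S p.2 ∧ Anc S p.2 (svF 𝒢 p.1) ∧ p.2 ≠ svF 𝒢 p.1)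
    with hQ
  have hgoal1 : ∑ v ∈ internalF 𝒢.tree, S.adj.dist S.root (svF 𝒢 v) = Q.card := by
    rw [Finset.card_eq_sum_card_fiberwise
      (f := fun p : VG × VS => p.1) (s := Q) (t := internalF 𝒢.tree)
      (fun p hp => by
        rw [hQ, Finset.mem_coe, Finset.mem_filter] at hp
        exact Finset.mem_filter.mpr ⟨Finset.mem_univ _, hp.2.1⟩)]
    refine Finset.sum_congr rfl (fun v hv => ?_)
    rw [← depth_eq_card_strict_anc S (svF 𝒢 v)]
    apply Finset.card_bij (fun w _ => (v, w))
    · intro w hw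
      rw [Finset.mem_filter] at hw
      rw [Finset.mem_filter, hQ, Finset.mem_filter]
      have hv' := (Finset.mem_filter.mp hv).2
      exact ⟨⟨Finset.mem_univ _, hv', hw.2.1, hw.2.2.1, hw.2.2.2⟩, rfl⟩
    · intro w₁ _ w₂ _ h
      exact (Prod.ext_iff.mp h).2
    · rintro ⟨v', w⟩ hp
      rw [Finset.mem_filter, hQ, Finset.mem_filter] at hp
      obtain ⟨⟨-, h1, h2, h3, h4⟩, h5⟩ := hp
      simp only at h5
      subst h5
      exact ⟨w, Finset.mem_filter.mpr ⟨Finset.mem_univ _, h2, h3, h4⟩, rfl⟩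
  have hgoal2 : (Q.card : ℕ) ≤ Hsum S := by
    rw [hsum_eq_sum_desc]
    rw [Finset.card_eq_sum_card_fiberwise
      (f := fun p : VG × VS => p.2) (s := Q) (t := internalF S)
      (fun p hp => by
        rw [hQ, Finset.mem_coe, Finset.mem_filter] at hp
        exact Finset.mem_filter.mpr ⟨Finset.mem_univ _, hp.2.2.1⟩)]
    refine Finset.sum_le_sum (fun u hu => ?_)
    have hu' := (Finset.mem_filter.mp hu).2
    refine le_trans (le_of_eq ?_) (cnt_le hS hOne hu')
    apply Finset.card_bij (fun p _ => p.1)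
    · rintro ⟨v, w⟩ hp
      rw [Finset.mem_filter, hQ, Finset.mem_filter] at hp
      obtain ⟨⟨-, h1, h2, h3, h4⟩, h5⟩ := hp
      simp only at h5
      subst h5
      exact Finset.mem_filter.mpr ⟨Finset.mem_univ _, h1, h3, h4⟩
    · rintro ⟨v₁, w₁⟩ h₁ ⟨v₂, w₂⟩ h₂ h
      rw [Finset.mem_filter, hQ] at h₁ h₂
      simp only [Finset.mem_filter] at h₁ h₂
      simp only at h
      rw [Prod.ext_iff]
      exact ⟨h, h₁.2.trans h₂.2.symm⟩
    · intro v hv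
      rw [Finset.mem_filter] at hv
      refine ⟨(v, u), ?_, rfl⟩
      rw [Finset.mem_filter, hQ, Finset.mem_filter]
      exact ⟨⟨Finset.mem_univ _, hv.2.1, hu', hv.2.2.1, hv.2.2.2⟩, rfl⟩
  omega

end PLRAux
namespace PLRAux

variable {VS VG VG₂ : Type*} [Fintype VS] [Fintype VG] [Fintype VG₂] {S : RTree VS}

lemma gamma_card (S : RTree VS) :
    Fintype.card {s // IsLeaf S s} = numLeaves S := by
  classical
  rw [Fintype.card_subtype, numLeaves_eq_leafF_card]
  rfl

lemma dPath_le_hsum (hS : IsSpeciesTree S) {𝒢₁ : Recon {s // IsLeaf S s} VG VS S}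
    {𝒢₂ : Recon {s // IsLeaf S s} VG₂ VS S}
    (hOne₁ : OneGenePerSpecies 𝒢₁) (hOne₂ : OneGenePerSpecies 𝒢₂)
    {m : VG → VG₂} (hm : IsLcaMap 𝒢₁ 𝒢₂ m) :
    dPath 𝒢₁ 𝒢₂ m ≤ Hsum S := by
  classical
  rw [dPath]
  have hzero : ∀ v ∈ (Finset.univ : Finset VG), v ∉ internalF 𝒢₁.tree →
      S.adj.dist (𝒢₁.μ v) (𝒢₂.μ (m v)) = 0 := by
    intro v _ hv
    have hleaf : IsLeaf 𝒢₁.tree v := by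
      by_contra h
      exact hv (Finset.mem_filter.mpr ⟨Finset.mem_univ _, h⟩)
    obtain ⟨g, rfl⟩ := (𝒢₁.geneLeaf_range v).mp hleaf
    rw [lcaMap_leaf hm, hOne₁ g, hOne₂ g, SimpleGraph.dist_self]
  rw [← Finset.sum_subset (Finset.subset_univ (internalF 𝒢₁.tree)) hzero]
  calc ∑ v ∈ internalF 𝒢₁.tree, S.adj.dist (𝒢₁.μ v) (𝒢₂.μ (m v))
      ≤ ∑ v ∈ internalF 𝒢₁.tree, S.adj.dist S.root (svF 𝒢₁ v) :=
        Finset.sum_le_sum (fun v _ => dist_mu_le hOne₁ hOne₂ hm v)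
    _ ≤ Hsum S := sum_svF_depth_le hS hOne₁

lemma dLbl_le {𝒢₁ : Recon {s // IsLeaf S s} VG VS S}
    {𝒢₂ : Recon {s // IsLeaf S s} VG₂ VS S}
    {m : VG → VG₂} (hm : IsLcaMap 𝒢₁ 𝒢₂ m) :
    dLbl 𝒢₁ 𝒢₂ m ≤ (internalF 𝒢₁.tree).card := by
  classical
  rw [dLbl]
  have : {v : VG | 𝒢₁.lbl v ≠ 𝒢₂.lbl (m v)}.ncard
      = (Finset.univ.filter (fun v : VG => 𝒢₁.lbl v ≠ 𝒢₂.lbl (m v))).card := by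
    rw [Set.ncard_eq_toFinset_card']
    congr 1
    ext v; simp
  rw [this]
  apply Finset.card_le_card
  intro v hv
  rw [Finset.mem_filter] at hv
  refine Finset.mem_filter.mpr ⟨Finset.mem_univ _, ?_⟩
  intro hleaf
  obtain ⟨g, rfl⟩ := (𝒢₁.geneLeaf_range v).mp hleaf
  apply hv.2
  rw [lcaMap_leaf hm, 𝒢₁.leaf_lbl _ hleaf, 𝒢₂.leaf_lbl _ (geneLeaf_isLeaf 𝒢₂ g)]

/-- dLbl is at most `n - 1` where `n` is the number of species leaves. -/
lemma dLbl_le' {𝒢₁ : Recon {s // IsLeaf S s} VG VS S}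
    {𝒢₂ : Recon {s // IsLeaf S s} VG₂ VS S}
    {m : VG → VG₂} (hm : IsLcaMap 𝒢₁ 𝒢₂ m) :
    dLbl 𝒢₁ 𝒢₂ m + 1 ≤ numLeaves S := by
  have h1 := dLbl_le hm
  have h2 := internal_card_le 𝒢₁.tree 𝒢₁.internal_children
  have h3 := leafF_card_eq 𝒢₁
  have h4 := gamma_card S
  omega

end PLRAux
namespace PLRAux

variable {VS : Type*} [Fintype VS] {S : RTree VS}

lemma lbl_ite_ne_spec (S : RTree VS) (b : Evt) (hb : b ≠ Evt.spec) (v : VS) :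
    (if IsLeaf S v then Evt.extant else b) ≠ Evt.spec := by
  split
  · simp
  · exact hb

/-- The speciation reconciled gene tree: the species tree itself. -/
noncomputable def reconSpec (S : RTree VS) (hS : IsSpeciesTree S) :
    Recon {s // IsLeaf S s} VS VS S where
  tree := S
  geneLeaf := Subtype.val
  geneLeaf_inj := Subtype.val_injective
  geneLeaf_range := fun v => ⟨fun h => ⟨⟨v, h⟩, rfl⟩, fun ⟨g, hg⟩ => hg ▸ g.2⟩
  μ := id
  lbl := fun v => if IsLeaf S v then Evt.extant else Evt.spec
  internal_children := fun v hv => le_of_eq (hS v hv).symm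
  leaf_species := fun v hv => hv
  leaf_lbl := fun v hv => if_pos hv
  internal_lbl := fun v hv => Or.inr (if_neg hv)
  time_consistent := fun a b h => h
  spec_two_children := fun v hv => by
    have hnl : ¬ IsLeaf S v := by
      intro h
      simp only [if_pos h] at hv
      exact Evt.noConfusion hv
    exact ⟨hnl, hS v hnl⟩
  spec_separates := fun v _ v₁ v₂ h₁ h₂ hne =>
    ⟨v₁, v₂, h₁, h₂, hne, Or.inl ⟨anc_refl S v₁, anc_refl S v₂⟩⟩

/-- The duplication reconciled gene tree: the species tree shape, all internal nodes
being duplications mapped to the root. -/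
noncomputable def reconDup (S : RTree VS) (hS : IsSpeciesTree S) :
    Recon {s // IsLeaf S s} VS VS S where
  tree := S
  geneLeaf := Subtype.val
  geneLeaf_inj := Subtype.val_injective
  geneLeaf_range := fun v => ⟨fun h => ⟨⟨v, h⟩, rfl⟩, fun ⟨g, hg⟩ => hg ▸ g.2⟩
  μ := fun v => if IsLeaf S v then v else S.root
  lbl := fun v => if IsLeaf S v then Evt.extant else Evt.dup
  internal_children := fun v hv => le_of_eq (hS v hv).symm
  leaf_species := fun v hv => by simpa [if_pos hv] using hv
  leaf_lbl := fun v hv => if_pos hv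
  internal_lbl := fun v hv => Or.inl (if_neg hv)
  time_consistent := fun a b h => by
    by_cases ha : IsLeaf S a
    · have := leaf_anc_eq ha h
      subst this
      exact anc_refl S _
    · show Anc S (if IsLeaf S a then a else S.root) _
      rw [if_neg ha]
      exact anc_root S _
  spec_two_children := fun v hv => absurd hv (lbl_ite_ne_spec S Evt.dup (by simp) v)
  spec_separates := fun v hv => absurd hv (lbl_ite_ne_spec S Evt.dup (by simp) v)

lemma reconSpec_one (hS : IsSpeciesTree S) : OneGenePerSpecies (reconSpec S hS) :=
  fun _ => rfl

lemma reconDup_one (hS : IsSpeciesTree S) : OneGenePerSpecies (reconDup S hS) :=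
  fun g => if_pos g.2

/-- every node of a tree is the LCA of its leaf descendants. -/
lemma node_is_lca (S : RTree VS) (hS : IsSpeciesTree S) (v : VS) :
    IsLCA S {x | IsLeaf S x ∧ Anc S v x} v := by
  constructor
  · exact fun x hx => hx.2
  · intro w' hw'
    by_cases hleaf : IsLeaf S v
    · exact hw' v ⟨hleaf, anc_refl S v⟩
    · obtain ⟨c₁, c₂, hc₁, hc₂, hcne⟩ := exists_two_children (le_of_eq (hS v hleaf).symm)
      obtain ⟨x₁, hx₁, hcx₁⟩ := exists_leaf_desc S c₁
      obtain ⟨x₂, hx₂, hcx₂⟩ := exists_leaf_desc S c₂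
      have hin₁ : Anc S w' x₁ := hw' x₁ ⟨hx₁, anc_trans hc₁.2 hcx₁⟩
      have hin₂ : Anc S w' x₂ := hw' x₂ ⟨hx₂, anc_trans hc₂.2 hcx₂⟩
      rcases le_total (S.adj.dist S.root w') (S.adj.dist S.root v) with hle | hle
      · exact anc_total hin₁ (anc_trans hc₁.2 hcx₁) hle
      · have hvw : Anc S v w' := anc_total (anc_trans hc₁.2 hcx₁) hin₁ hle
        by_cases hveq : v = w'
        · exact hveq ▸ anc_refl S v
        · obtain ⟨c, hc, hcw⟩ := anc_child_exists hvw hveq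
          have h1 : c = c₁ := child_anc_unique hc hc₁ (anc_trans hcw hin₁) hcx₁
          have h2 : c = c₂ := child_anc_unique hc hc₂ (anc_trans hcw hin₂) hcx₂
          exact absurd (h1 ▸ h2) hcne

lemma recon_self_lcaMap (hS : IsSpeciesTree S)
    (𝒢₁ 𝒢₂ : Recon {s // IsLeaf S s} VS VS S)
    (ht₁ : 𝒢₁.tree = S) (ht₂ : 𝒢₂.tree = S)
    (hg₁ : ∀ g, 𝒢₁.geneLeaf g = g.1) (hg₂ : ∀ g, 𝒢₂.geneLeaf g = g.1) :
    IsLcaMap 𝒢₁ 𝒢₂ id := by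
  intro v
  have himg : 𝒢₂.geneLeaf '' gclade 𝒢₁ v = {x | IsLeaf S x ∧ Anc S v x} := by
    ext x
    constructor
    · rintro ⟨g, hg, rfl⟩
      rw [hg₂ g]
      refine ⟨g.2, ?_⟩
      have : Anc 𝒢₁.tree v (𝒢₁.geneLeaf g) := hg
      rwa [ht₁, hg₁ g] at this
    · rintro ⟨hx, hanc⟩
      refine ⟨⟨x, hx⟩, ?_, hg₂ _⟩
      show Anc 𝒢₁.tree v (𝒢₁.geneLeaf ⟨x, hx⟩)
      rw [ht₁, hg₁]
      exact hanc
  rw [himg, ht₂]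
  exact node_is_lca S hS v

end PLRAux
namespace PLRAux

variable {VS : Type*} [Fintype VS] {S : RTree VS}

lemma dPath_spec_dup (hS : IsSpeciesTree S) :
    dPath (reconSpec S hS) (reconDup S hS) id = Hsum S := by
  rw [dPath, Hsum]
  refine Finset.sum_congr rfl (fun v _ => ?_)
  show S.adj.dist v (if IsLeaf S v then v else S.root) = _
  by_cases h : IsLeaf S v
  · rw [if_pos h, if_pos h, SimpleGraph.dist_self]
  · rw [if_neg h, if_neg h, SimpleGraph.dist_comm]

lemma dPath_dup_spec (hS : IsSpeciesTree S) :
    dPath (reconDup S hS) (reconSpec S hS) id = Hsum S := by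
  rw [dPath, Hsum]
  refine Finset.sum_congr rfl (fun v _ => ?_)
  show S.adj.dist (if IsLeaf S v then v else S.root) v = _
  by_cases h : IsLeaf S v
  · rw [if_pos h, if_pos h, SimpleGraph.dist_self]
  · rw [if_neg h, if_neg h]

lemma dLbl_spec_dup (hS : IsSpeciesTree S) :
    dLbl (reconSpec S hS) (reconDup S hS) id = (internalF S).card := by
  classical
  rw [dLbl]
  have hset : {v : VS | (reconSpec S hS).lbl v ≠ (reconDup S hS).lbl (id v)}
      = {v | ¬ IsLeaf S v} := by
    ext v
    show (if IsLeaf S v then Evt.extant else Evt.spec)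
      ≠ (if IsLeaf S v then Evt.extant else Evt.dup) ↔ _
    by_cases h : IsLeaf S v <;> simp [h]
  rw [hset, Set.ncard_eq_toFinset_card']
  congr 1
  ext v
  simp [internalF]

lemma dLbl_dup_spec (hS : IsSpeciesTree S) :
    dLbl (reconDup S hS) (reconSpec S hS) id = (internalF S).card := by
  classical
  rw [dLbl]
  have hset : {v : VS | (reconDup S hS).lbl v ≠ (reconSpec S hS).lbl (id v)}
      = {v | ¬ IsLeaf S v} := by
    ext v
    show (if IsLeaf S v then Evt.extant else Evt.dup)
      ≠ (if IsLeaf S v then Evt.extant else Evt.spec) ↔ _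
    by_cases h : IsLeaf S v <;> simp [h]
  rw [hset, Set.ncard_eq_toFinset_card']
  congr 1
  ext v
  simp [internalF]

end PLRAux

open PLRAux

/-- for every species tree on `n ≥ 2` leaves,
`diam(PLR,S) ≤ α(n−1)(n−2) + (1−α)(2n−2)`; if `S` is a caterpillar, then
`H(S) = (n−1)(n−2)/2` and the bound is attained (so caterpillars maximize the diameter). -/
theorem stmt13 (hS : IsSpeciesTree S) (n : ℕ) (hn : numLeaves S = n) (h2 : 2 ≤ n)
    (α : ℝ) (hα₀ : 0 ≤ α) (hα₁ : α ≤ 1) :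
    (∀ (VG₁ VG₂ : Type) [Fintype VG₁] [Fintype VG₂]
      (𝒢₁ : Recon {s : VS // IsLeaf S s} VG₁ VS S)
      (𝒢₂ : Recon {s : VS // IsLeaf S s} VG₂ VS S),
      OneGenePerSpecies 𝒢₁ → OneGenePerSpecies 𝒢₂ →
      ∀ (m₁₂ : VG₁ → VG₂) (m₂₁ : VG₂ → VG₁),
        IsLcaMap 𝒢₁ 𝒢₂ m₁₂ → IsLcaMap 𝒢₂ 𝒢₁ m₂₁ →
        PLR α 𝒢₁ 𝒢₂ m₁₂ m₂₁ ≤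
          α * ((n : ℝ) - 1) * ((n : ℝ) - 2) + (1 - α) * (2 * (n : ℝ) - 2)) ∧
    (Caterpillar S →
      (Hsum S : ℝ) = ((n : ℝ) - 1) * ((n : ℝ) - 2) / 2 ∧
      ∃ (𝒢₁ 𝒢₂ : Recon {s : VS // IsLeaf S s} VS VS S) (m₁₂ m₂₁ : VS → VS),
        OneGenePerSpecies 𝒢₁ ∧ OneGenePerSpecies 𝒢₂ ∧
        IsLcaMap 𝒢₁ 𝒢₂ m₁₂ ∧ IsLcaMap 𝒢₂ 𝒢₁ m₂₁ ∧
        PLR α 𝒢₁ 𝒢₂ m₁₂ m₂₁ =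
          α * ((n : ℝ) - 1) * ((n : ℝ) - 2) + (1 - α) * (2 * (n : ℝ) - 2)) := by
  have hIcard : (internalF S).card = n - 1 := by
    have h3 := species_internal_card hS
    have h4 := numLeaves_eq_leafF_card S
    omega
  have hcast1 : ((n - 1 : ℕ) : ℝ) = (n : ℝ) - 1 := by
    rw [Nat.cast_sub (by omega)]
    norm_num
  have hcast2 : ((n - 2 : ℕ) : ℝ) = (n : ℝ) - 2 := by
    rw [Nat.cast_sub (by omega)]
    norm_num
  have hHle : 2 * Hsum S ≤ (n - 1) * (n - 2) := by
    have h := two_hsum_le S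
    rw [hIcard] at h
    have he : n - 1 - 1 = n - 2 := by omega
    rwa [he] at h
  have hα₂ : (0:ℝ) ≤ 1 - α := by linarith
  constructor
  · intro VG₁ VG₂ _ _ 𝒢₁ 𝒢₂ hOne₁ hOne₂ m₁₂ m₂₁ hm₁₂ hm₂₁
    have hp1 := dPath_le_hsum hS hOne₁ hOne₂ hm₁₂
    have hp2 := dPath_le_hsum hS hOne₂ hOne₁ hm₂₁
    have hl1 := dLbl_le' hm₁₂
    have hl2 := dLbl_le' hm₂₁
    have hpn : dPath 𝒢₁ 𝒢₂ m₁₂ + dPath 𝒢₂ 𝒢₁ m₂₁ ≤ (n - 1) * (n - 2) := by omega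
    have hln : dLbl 𝒢₁ 𝒢₂ m₁₂ + dLbl 𝒢₂ 𝒢₁ m₂₁ ≤ 2 * (n - 1) := by omega
    have hpr : (dPath 𝒢₁ 𝒢₂ m₁₂ : ℝ) + (dPath 𝒢₂ 𝒢₁ m₂₁ : ℝ)
        ≤ ((n : ℝ) - 1) * ((n : ℝ) - 2) := by
      rw [← hcast1, ← hcast2, ← Nat.cast_mul, ← Nat.cast_add]
      exact_mod_cast hpn
    have hlr : (dLbl 𝒢₁ 𝒢₂ m₁₂ : ℝ) + (dLbl 𝒢₂ 𝒢₁ m₂₁ : ℝ)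
        ≤ 2 * (n : ℝ) - 2 := by
      have : ((2 * (n - 1) : ℕ) : ℝ) = 2 * (n : ℝ) - 2 := by
        push_cast [Nat.cast_sub (show 1 ≤ n by omega)]
        ring
      rw [← this, ← Nat.cast_add]
      exact_mod_cast hln
    rw [PLR, dAsym, dAsym]
    have h1 := mul_le_mul_of_nonneg_left hpr hα₀
    have h2 := mul_le_mul_of_nonneg_left hlr hα₂
    nlinarith [h1, h2]
  · intro hcat
    have hHval : 2 * Hsum S = (n - 1) * (n - 2) := by
      have h := cat_two_hsum hcat
      rw [hIcard] at h
      have he : n - 1 - 1 = n - 2 := by omega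
      rwa [he] at h
    have hHr : 2 * (Hsum S : ℝ) = ((n : ℝ) - 1) * ((n : ℝ) - 2) := by
      rw [← hcast1, ← hcast2, ← Nat.cast_mul]
      exact_mod_cast congrArg (Nat.cast : ℕ → ℝ) hHval
    constructor
    · linarith
    · refine ⟨reconSpec S hS, reconDup S hS, id, id, reconSpec_one hS, reconDup_one hS,
        recon_self_lcaMap hS _ _ rfl rfl (fun g => rfl) (fun g => rfl),
        recon_self_lcaMap hS _ _ rfl rfl (fun g => rfl) (fun g => rfl), ?_⟩
      rw [PLR, dAsym, dAsym, dPath_spec_dup hS, dPath_dup_spec hS,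
        dLbl_spec_dup hS, dLbl_dup_spec hS]
      have hIr : ((internalF S).card : ℝ) = (n : ℝ) - 1 := by
        rw [hIcard, hcast1]
      rw [hIr]
      linear_combination α * hHr
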